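/- arXiv:1909.12499 — 2 statements merged into one kernel-verified Lean document; each statement's English description precedes it below -/
import Mathlib

section
/- Let (Ω, F, μ) be a probability space and X : Ω → ℝ a bounded measurable function. Then CVaR_α(X) converges to the essential supremum of X as α tends to 0 from above: lim_{α→0⁺} inf_{z∈ℝ} { z + (1/α) ∫ max(X(ω) − z, 0) dμ(ω) } = essSup_μ X. -/
open MeasureTheory

/-- The conditional value-at-risk at confidence level `α` of a random variable `X`
on a probability space `(Ω, μ)`:
`CVaRμ μ α X = ⨅ z, z + (1/α) * ∫ ω, max (X ω - z) 0 ∂μ`. -/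
noncomputable def CVaRm {Ω : Type*} [MeasurableSpace Ω] (μ : Measure Ω) (α : ℝ)
    (X : Ω → ℝ) : ℝ :=
  ⨅ z : ℝ, z + (1 / α) * ∫ ω, max (X ω - z) 0 ∂μ

private lemma cvar_integrable_aux {Ω : Type*} [MeasurableSpace Ω] (μ : Measure Ω)
    [IsProbabilityMeasure μ]
    (X : Ω → ℝ) (hX : Measurable X) (C : ℝ) (hC : ∀ ω, |X ω| ≤ C) (z : ℝ) :
    Integrable (fun ω => max (X ω - z) 0) μ := by
  apply Integrable.mono' (integrable_const (C + |z|))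
    ((hX.sub measurable_const).max measurable_const).aestronglyMeasurable
  filter_upwards with ω
  rw [Real.norm_eq_abs, abs_of_nonneg (le_max_right _ _)]
  have := (abs_le.1 (hC ω)).2
  change max (X ω - z) 0 ≤ C + |z|
  rcases le_or_gt (X ω - z) 0 with h | h
  · simp only [max_eq_right h]; have := abs_nonneg (X ω); have := abs_nonneg z
    linarith [hC ω]
  · rw [max_eq_left h.le]; have := neg_abs_le z; linarith

/-- CVaR converges to the essential supremum as the confidence level tends to 0. -/
theorem cvar_tendsto_essSup {Ω : Type*} [MeasurableSpace Ω]
    (μ : Measure Ω) [IsProbabilityMeasure μ]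
    (X : Ω → ℝ) (hX : Measurable X) (C : ℝ) (hC : ∀ ω, |X ω| ≤ C) :
    Filter.Tendsto (fun α : ℝ => CVaRm μ α X)
      (nhdsWithin 0 (Set.Ioi 0)) (nhds (essSup X μ)) := by
  have hne : (MeasureTheory.ae μ).NeBot := ae_neBot.2 (IsProbabilityMeasure.ne_zero μ)
  set M := essSup X μ with hM
  have hbdd : Filter.IsBoundedUnder (· ≤ ·) (MeasureTheory.ae μ) X :=
    Filter.isBoundedUnder_of ⟨C, fun ω => (abs_le.1 (hC ω)).2⟩
  have hcobdd : Filter.IsCoboundedUnder (· ≤ ·) (MeasureTheory.ae μ) X :=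
    Filter.isCoboundedUnder_le_of_le _ (fun ω => (abs_le.1 (hC ω)).1)
  have hXM : ∀ᵐ ω ∂μ, X ω ≤ M := ae_le_essSup hbdd
  -- measure of exceedance sets is positive
  have hpos : ∀ ε : ℝ, 0 < ε → 0 < (μ {ω | M - ε < X ω}).toReal := by
    intro ε hε
    have hne0 : μ {ω | M - ε < X ω} ≠ 0 := by
      intro h0
      have hle : ∀ᵐ ω ∂μ, X ω ≤ M - ε := by
        rw [MeasureTheory.ae_iff]
        convert h0 using 2
        ext ω; simp [not_le]
      have : M ≤ M - ε := Filter.limsup_le_of_le hcobdd hle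
      linarith
    exact ENNReal.toReal_pos hne0 (measure_ne_top μ _)
  rw [Metric.tendsto_nhdsWithin_nhds]
  intro ε hε
  set ε' := ε / 2 with hε'
  have hε'pos : 0 < ε' := by positivity
  set p := (μ {ω | M - ε' < X ω}).toReal with hp
  have hppos : 0 < p := hpos ε' hε'pos
  refine ⟨p, hppos, fun α hα hαd => ?_⟩
  simp only [Set.mem_Ioi] at hα
  rw [Real.dist_eq, abs_sub_lt_iff] at hαd ⊢
  have hαp : α < p := by have := hαd.1; simp at this; linarith
  have hα1 : 0 < 1 / α := by positivity
  -- lower bound: each term is ≥ M - ε'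
  have hlb : ∀ z : ℝ, M - ε' ≤ z + (1 / α) * ∫ ω, max (X ω - z) 0 ∂μ := by
    intro z
    have hint := cvar_integrable_aux μ X hX C hC z
    have hnn : 0 ≤ ∫ ω, max (X ω - z) 0 ∂μ :=
      integral_nonneg fun ω => le_max_right _ _
    rcases le_or_gt (M - ε') z with hz | hz
    · nlinarith
    · -- integral ≥ (M - ε' - z) * p
      have hA : MeasurableSet {ω | M - ε' < X ω} := measurableSet_lt measurable_const hX
      have hind : ∀ ω, ({ω | M - ε' < X ω}).indicator
          (fun _ => M - ε' - z) ω ≤ max (X ω - z) 0 := by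
        intro ω
        by_cases hω : ω ∈ {ω | M - ε' < X ω}
        · rw [Set.indicator_of_mem hω]
          have : M - ε' < X ω := hω
          exact le_max_of_le_left (by linarith)
        · rw [Set.indicator_of_notMem hω]; exact le_max_right _ _
      have hIi : ∫ ω, ({ω | M - ε' < X ω}).indicator (fun _ => M - ε' - z) ω ∂μ
          = p * (M - ε' - z) := by
        rw [integral_indicator_const _ hA]; simp [hp, mul_comm, measureReal_def]
      have hIle : p * (M - ε' - z) ≤ ∫ ω, max (X ω - z) 0 ∂μ := by
        rw [← hIi]
        exact integral_mono ((integrable_const _).indicator hA) hint hind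
      have h1 : 1 ≤ p / α := (one_le_div hα).2 hαp.le
      have : z + (1 / α) * (p * (M - ε' - z)) ≤ z + (1 / α) * ∫ ω, max (X ω - z) 0 ∂μ := by
        gcongr
      refine le_trans ?_ this
      have : (1 / α) * (p * (M - ε' - z)) = (p / α) * (M - ε' - z) := by ring
      rw [this]
      nlinarith
  -- upper bound: CVaR ≤ M
  have hub : CVaRm μ α X ≤ M := by
    have h0 : ∫ ω, max (X ω - M) 0 ∂μ = 0 := by
      have : ∫ ω, max (X ω - M) 0 ∂μ = ∫ _ω, (0 : ℝ) ∂μ := by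
        apply integral_congr_ae
        filter_upwards [hXM] with ω hω
        simp [max_eq_right (by linarith : X ω - M ≤ 0)]
      rw [this, integral_zero]
    have : CVaRm μ α X ≤ M + (1 / α) * ∫ ω, max (X ω - M) 0 ∂μ :=
      ciInf_le ⟨M - ε', by rintro x ⟨z, rfl⟩; exact hlb z⟩ M
    rw [h0] at this; simpa using this
  have hlb' : M - ε' ≤ CVaRm μ α X := le_ciInf hlb
  constructor <;> [linarith; linarith]
end

section
/- Characterization of CVaR minimizers (Rockafellar–Uryasev): let (Ω, F, μ) be a probability space, α ∈ (0,1], X : Ω → ℝ a bounded measurable function, and z₀ ∈ ℝ a real number satisfying μ{ω : X(ω) > z₀} ≤ α and μ{ω : X(ω) ≥ z₀} ≥ α. Then z₀ attains the infimum in the definition of CVaR: z₀ + (1/α) ∫ max(X(ω) − z₀, 0) dμ(ω) = inf_{z∈ℝ} { z + (1/α) ∫ max(X(ω) − z, 0) dμ(ω) }. -/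
open MeasureTheory

/-- Rockafellar–Uryasev: any α-quantile z₀ of X attains the infimum in the
definition of CVaR. -/
theorem cvar_inf_attained_at_quantile {Ω : Type*} [MeasurableSpace Ω]
    (μ : Measure Ω) [IsProbabilityMeasure μ]
    {α : ℝ} (hα0 : 0 < α) (hα1 : α ≤ 1)
    (X : Ω → ℝ) (hX : Measurable X) (C : ℝ) (hC : ∀ ω, |X ω| ≤ C)
    (z₀ : ℝ) (h₁ : μ {ω | z₀ < X ω} ≤ ENNReal.ofReal α)
    (h₂ : ENNReal.ofReal α ≤ μ {ω | z₀ ≤ X ω}) :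
    z₀ + (1 / α) * ∫ ω, max (X ω - z₀) 0 ∂μ = CVaRm μ α X := by
  have hInt : ∀ z : ℝ, Integrable (fun ω => max (X ω - z) 0) μ := by
    intro z
    refine (integrable_const (C + |z|)).mono'
      ((hX.sub measurable_const).max measurable_const).aestronglyMeasurable
      (ae_of_all _ fun ω => ?_)
    have h := hC ω
    rw [Real.norm_eq_abs]
    rw [abs_of_nonneg (le_max_right _ _)]
    have : X ω - z ≤ C + |z| := by
      have := abs_le.1 h
      have := abs_le.1 (le_refl |z|) -- dummy
      cases abs_cases z with
      | inl hz => linarith [hz.1, (abs_le.1 h).2]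
      | inr hz => linarith [hz.1, (abs_le.1 h).2, abs_nonneg z]
    have hc : (0:ℝ) ≤ C + |z| := by
      have := abs_nonneg (X ω); linarith [abs_nonneg z, (abs_nonneg (X ω)).trans h]
    exact max_le this hc
  have key : ∀ z : ℝ, z₀ + (1 / α) * ∫ ω, max (X ω - z₀) 0 ∂μ ≤
      z + (1 / α) * ∫ ω, max (X ω - z) 0 ∂μ := by
    intro z
    rcases le_total z₀ z with hz | hz
    · -- use h₁ on s = {X > z₀}
      set s : Set Ω := {ω | z₀ < X ω} with hs_def
      have hs : MeasurableSet s := measurableSet_lt measurable_const hX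
      have ht : (μ s).toReal ≤ α :=
        ENNReal.toReal_le_of_le_ofReal hα0.le h₁
      have ht0 : 0 ≤ (μ s).toReal := ENNReal.toReal_nonneg
      have hpt : ∀ ω, max (X ω - z₀) 0 ≤
          max (X ω - z) 0 + s.indicator (fun _ => z - z₀) ω := by
        intro ω
        by_cases hω : z₀ < X ω
        · rw [Set.indicator_of_mem (show ω ∈ s from hω)]
          rcases le_total (X ω) z with h' | h'
          · have : max (X ω - z₀) 0 = X ω - z₀ := max_eq_left (by linarith)
            rw [this]
            have : (0:ℝ) ≤ max (X ω - z) 0 := le_max_right _ _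
            linarith
          · rw [max_eq_left (by linarith : (0:ℝ) ≤ X ω - z₀),
              max_eq_left (by linarith : (0:ℝ) ≤ X ω - z)]
            linarith
        · rw [Set.indicator_of_notMem (show ω ∉ s from hω)]
          push_neg at hω
          rw [max_eq_right (by linarith : X ω - z₀ ≤ 0)]
          simp [le_max_right]
      have hint2 : Integrable (s.indicator fun _ : Ω => z - z₀) μ :=
        (integrable_const (z - z₀)).indicator hs
      have hmono : ∫ ω, max (X ω - z₀) 0 ∂μ ≤
          ∫ ω, (max (X ω - z) 0 + s.indicator (fun _ => z - z₀) ω) ∂μ :=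
        integral_mono (hInt z₀) ((hInt z).add hint2) hpt
      rw [integral_add (hInt z) hint2, integral_indicator_const _ hs] at hmono
      simp only [smul_eq_mul, measureReal_def] at hmono
      have h1α : 0 < 1 / α := by positivity
      have : (1/α) * ∫ ω, max (X ω - z₀) 0 ∂μ ≤
          (1/α) * (∫ ω, max (X ω - z) 0 ∂μ) + (1/α) * ((μ s).toReal * (z - z₀)) := by
        nlinarith [mul_le_mul_of_nonneg_left hmono h1α.le]
      have h2 : (1/α) * ((μ s).toReal * (z - z₀)) ≤ z - z₀ := by
        rw [div_mul_eq_mul_div, one_mul, div_le_iff₀ hα0]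
        nlinarith
      linarith
    · -- z ≤ z₀, use h₂ on s = {X ≥ z₀}
      set s : Set Ω := {ω | z₀ ≤ X ω} with hs_def
      have hs : MeasurableSet s := measurableSet_le measurable_const hX
      have hμfin : μ s ≠ ⊤ := measure_ne_top μ s
      have ht : α ≤ (μ s).toReal := by
        rw [← ENNReal.ofReal_le_iff_le_toReal hμfin] at *
        exact h₂
      have hpt : ∀ ω, max (X ω - z₀) 0 + s.indicator (fun _ => z₀ - z) ω ≤
          max (X ω - z) 0 := by
        intro ω
        by_cases hω : z₀ ≤ X ω
        · rw [Set.indicator_of_mem (show ω ∈ s from hω),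
            max_eq_left (by linarith : (0:ℝ) ≤ X ω - z₀),
            max_eq_left (by linarith : (0:ℝ) ≤ X ω - z)]
          linarith
        · rw [Set.indicator_of_notMem (show ω ∉ s from hω)]
          push_neg at hω
          rw [max_eq_right (by linarith : X ω - z₀ ≤ 0)]
          simp [le_max_right]
      have hint2 : Integrable (s.indicator fun _ : Ω => z₀ - z) μ :=
        (integrable_const (z₀ - z)).indicator hs
      have hmono : ∫ ω, (max (X ω - z₀) 0 + s.indicator (fun _ => z₀ - z) ω) ∂μ ≤
          ∫ ω, max (X ω - z) 0 ∂μ :=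
        integral_mono ((hInt z₀).add hint2) (hInt z) hpt
      rw [integral_add (hInt z₀) hint2, integral_indicator_const _ hs] at hmono
      simp only [smul_eq_mul, measureReal_def] at hmono
      have h1α : 0 < 1 / α := by positivity
      have hmul : (1/α) * (∫ ω, max (X ω - z₀) 0 ∂μ + (μ s).toReal * (z₀ - z)) ≤
          (1/α) * ∫ ω, max (X ω - z) 0 ∂μ :=
        mul_le_mul_of_nonneg_left hmono h1α.le
      have h2 : z₀ - z ≤ (1/α) * ((μ s).toReal * (z₀ - z)) := by
        rw [div_mul_eq_mul_div, one_mul, le_div_iff₀ hα0]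
        nlinarith
      nlinarith [hmul]
  have hbdd : BddBelow (Set.range fun z : ℝ =>
      z + (1 / α) * ∫ ω, max (X ω - z) 0 ∂μ) := by
    refine ⟨z₀ + (1 / α) * ∫ ω, max (X ω - z₀) 0 ∂μ, ?_⟩
    rintro _ ⟨z, rfl⟩
    exact key z
  exact le_antisymm (le_ciInf key) (ciInf_le hbdd z₀)
end
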